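/- arXiv:2007.13319 — 2 statements merged into one kernel-verified Lean document; each statement's English description precedes it below -/
import Mathlib

section
/- Suppose f, g, φ, ψ are vectors in a Hilbert space such that f⊗g + φ⊗ψ is self-adjoint. Then {f, g} is linearly dependent if and only if {φ, ψ} is linearly dependent. -/
open scoped InnerProductSpace
open scoped ComplexConjugate

noncomputable section

/-- The rank-one operator `f ⊗ g` on a Hilbert space, acting by `h ↦ ⟨h, g⟩ f = ⟪g, h⟫_ℂ • f`
(inner products are conjugate-linear in the second entry of `⟨·,·⟩`). -/
def rankOne {H : Type*} [NormedAddCommGroup H] [InnerProductSpace ℂ H] (f g : H) :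
    H →L[ℂ] H := (innerSL ℂ g).smulRight f

lemma lemA {H : Type*} [NormedAddCommGroup H] [InnerProductSpace ℂ H]
    (φ ψ g : H) (μ : H → ℂ)
    (hμ : ∀ x, ⟪φ, x⟫_ℂ • ψ - ⟪ψ, x⟫_ℂ • φ = μ x • g) :
    ∃ c : ℂ, φ = c • ψ ∨ ψ = c • φ := by
  by_contra hc
  push_neg at hc
  have hφ : φ ≠ 0 := fun h => (hc 0).1 (by simp [h])
  have hψ : ψ ≠ 0 := fun h => (hc 0).2 (by simp [h])
  have hφφ : ⟪φ, φ⟫_ℂ ≠ 0 := by simpa using hφ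
  have hψψ : ⟪ψ, ψ⟫_ℂ ≠ 0 := by simpa using hψ
  -- first component
  set a : ℂ := ⟪φ, ψ⟫_ℂ / ⟪φ, φ⟫_ℂ with ha
  set h₁ : H := ψ - a • φ with hh₁
  have h10 : h₁ ≠ 0 := fun h0 => (hc a).2 (by rw [← sub_eq_zero]; exact h0)
  have e1 : ⟪φ, h₁⟫_ℂ = 0 := by
    simp [hh₁, inner_sub_right, inner_smul_right, ha, div_mul_cancel₀, hφφ, hφ]
  have e2 : ⟪ψ, h₁⟫_ℂ = ⟪h₁, h₁⟫_ℂ := by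
    have hψ' : ψ = h₁ + a • φ := by simp [hh₁]
    nth_rewrite 1 [hψ']
    rw [inner_add_left, inner_smul_left, e1]
    ring
  have h11 : (-⟪h₁, h₁⟫_ℂ) ≠ 0 := by
    simpa using h10
  have key1 : (-⟪h₁, h₁⟫_ℂ) • φ = μ h₁ • g := by
    have := hμ h₁
    rw [e1, e2, zero_smul, zero_sub, ← neg_smul] at this
    exact this
  have eφ : φ = ((-⟪h₁, h₁⟫_ℂ)⁻¹ * μ h₁) • g := by
    calc φ = (-⟪h₁, h₁⟫_ℂ)⁻¹ • ((-⟪h₁, h₁⟫_ℂ) • φ) := (inv_smul_smul₀ h11 φ).symm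
    _ = ((-⟪h₁, h₁⟫_ℂ)⁻¹ * μ h₁) • g := by rw [key1, smul_smul]
  -- second component
  set b : ℂ := ⟪ψ, φ⟫_ℂ / ⟪ψ, ψ⟫_ℂ with hb
  set h₂ : H := φ - b • ψ with hh₂
  have h20 : h₂ ≠ 0 := fun h0 => (hc b).1 (by rw [← sub_eq_zero]; exact h0)
  have f1 : ⟪ψ, h₂⟫_ℂ = 0 := by
    simp [hh₂, inner_sub_right, inner_smul_right, hb, div_mul_cancel₀, hψψ, hψ]
  have f2 : ⟪φ, h₂⟫_ℂ = ⟪h₂, h₂⟫_ℂ := by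
    have hφ' : φ = h₂ + b • ψ := by simp [hh₂]
    nth_rewrite 1 [hφ']
    rw [inner_add_left, inner_smul_left, f1]
    ring
  have h22 : ⟪h₂, h₂⟫_ℂ ≠ 0 := by simpa using h20
  have key2 : ⟪h₂, h₂⟫_ℂ • ψ = μ h₂ • g := by
    have := hμ h₂
    rw [f1, f2, zero_smul, sub_zero] at this
    exact this
  have eψ : ψ = ((⟪h₂, h₂⟫_ℂ)⁻¹ * μ h₂) • g := by
    calc ψ = (⟪h₂, h₂⟫_ℂ)⁻¹ • (⟪h₂, h₂⟫_ℂ • ψ) := (inv_smul_smul₀ h22 ψ).symm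
    _ = ((⟪h₂, h₂⟫_ℂ)⁻¹ * μ h₂) • g := by rw [key2, smul_smul]
  -- combine
  set α : ℂ := (-⟪h₁, h₁⟫_ℂ)⁻¹ * μ h₁ with hα
  set β : ℂ := (⟪h₂, h₂⟫_ℂ)⁻¹ * μ h₂ with hβ
  have hα0 : α ≠ 0 := by
    intro h0
    apply hφ
    rw [eφ, h0, zero_smul]
  apply (hc (β / α)).2
  rw [eφ, eψ, smul_smul, div_mul_cancel₀ _ hα0]

lemma lemB {H : Type*} [NormedAddCommGroup H] [InnerProductSpace ℂ H]
    (f g φ ψ : H)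
    (key : ∀ x, ⟪f, x⟫_ℂ • g + ⟪φ, x⟫_ℂ • ψ = ⟪g, x⟫_ℂ • f + ⟪ψ, x⟫_ℂ • φ)
    (hd : ∃ c : ℂ, f = c • g ∨ g = c • f) : ∃ c : ℂ, φ = c • ψ ∨ ψ = c • φ := by
  obtain ⟨c, hcase⟩ := hd
  rcases hcase with rfl | rfl
  · apply lemA φ ψ g (fun x => (c - conj c) * ⟪g, x⟫_ℂ)
    intro x
    have hk := key x
    rw [inner_smul_left] at hk
    have h2 : ⟪φ, x⟫_ℂ • ψ - ⟪ψ, x⟫_ℂ • φ =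
        ⟪g, x⟫_ℂ • (c • g) - (conj c * ⟪g, x⟫_ℂ) • g := by
      rw [sub_eq_sub_iff_add_eq_add, add_comm]
      exact hk
    rw [h2, smul_smul, ← sub_smul]
    congr 1
    ring
  · apply lemA φ ψ f (fun x => (conj c - c) * ⟪f, x⟫_ℂ)
    intro x
    have hk := key x
    rw [inner_smul_left] at hk
    have h2 : ⟪φ, x⟫_ℂ • ψ - ⟪ψ, x⟫_ℂ • φ =
        (conj c * ⟪f, x⟫_ℂ) • f - ⟪f, x⟫_ℂ • (c • f) := by
      rw [sub_eq_sub_iff_add_eq_add, add_comm]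
      exact hk
    rw [h2, smul_smul, ← sub_smul]
    congr 1
    ring

/-- If `f ⊗ g + φ ⊗ ψ` is self-adjoint, then `{f, g}` is linearly dependent
(one is a scalar multiple of the other) iff `{φ, ψ}` is. -/
theorem rankOne_add_rankOne_selfAdjoint_dep_iff {H : Type*} [NormedAddCommGroup H]
    [InnerProductSpace ℂ H] [CompleteSpace H] (f g φ ψ : H)
    (h : IsSelfAdjoint (rankOne f g + rankOne φ ψ)) :
    (∃ c : ℂ, f = c • g ∨ g = c • f) ↔ (∃ c : ℂ, φ = c • ψ ∨ ψ = c • φ) := by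
  have hadj : ∀ (u v : H), ContinuousLinearMap.adjoint (rankOne u v) = rankOne v u := by
    intro u v
    symm
    rw [ContinuousLinearMap.eq_adjoint_iff]
    intro x y
    simp [rankOne, inner_smul_left, inner_smul_right, mul_comm]
  have heq : rankOne g f + rankOne ψ φ = rankOne f g + rankOne φ ψ := by
    have := h
    rw [IsSelfAdjoint, ContinuousLinearMap.star_eq_adjoint, map_add, hadj, hadj] at this
    exact this
  have key : ∀ x, ⟪f, x⟫_ℂ • g + ⟪φ, x⟫_ℂ • ψ = ⟪g, x⟫_ℂ • f + ⟪ψ, x⟫_ℂ • φ := by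
    intro x
    have := DFunLike.congr_fun heq x
    simpa [rankOne] using this
  constructor
  · exact lemB f g φ ψ key
  · apply lemB φ ψ f g
    intro x
    rw [add_comm (⟪φ, x⟫_ℂ • ψ), add_comm (⟪ψ, x⟫_ℂ • φ)]
    exact key x

end
end

section
/- For f, g ∈ L^∞(T), the operator T_{z̄} T_f T_g T_z − T_f T_g is a rank-one operator; explicitly, it equals (V H_{f̄} 1) ⊗ (V H_g 1), where V is the anti-unitary operator on L² given by (Vh)(w) = w̄ · conj(h(w)). -/
open MeasureTheory Complex AddCircle
open scoped ENNReal ComplexConjugate InnerProductSpace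

noncomputable section

namespace ToeplitzProj

instance : Fact (0 < 2 * Real.pi) := ⟨by positivity⟩
instance : Fact ((1:ℝ≥0∞) ≤ ⊤) := ⟨le_top⟩

abbrev 𝕋 : Type := AddCircle (2 * Real.pi)
abbrev μT : Measure 𝕋 := haarAddCircle
abbrev L2 : Type := Lp ℂ 2 μT
abbrev Linf : Type := Lp ℂ ⊤ μT

/-- The rank-one operator `f ⊗ g`, acting by `h ↦ ⟨h, g⟩ f = ⟪g, h⟫ • f`. -/
def rankOne {H : Type*} [NormedAddCommGroup H] [InnerProductSpace ℂ H] (f g : H) :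
    H →L[ℂ] H := (innerSL ℂ g).smulRight f

theorem memLp_conj (h : L2) : MemLp (fun x => conj ((h : 𝕋 → ℂ) x)) 2 μT :=
  ⟨RCLike.continuous_conj.comp_aestronglyMeasurable (Lp.memLp h).1,
    by
      rw [show (fun x => conj ((h : 𝕋 → ℂ) x)) = conj (h : 𝕋 → ℂ) from rfl, eLpNorm_conj]
      exact (Lp.memLp h).2⟩

/-- Pointwise complex conjugation on `L²`. -/
def conjL2 (h : L2) : L2 := (memLp_conj h).toLp _

theorem memLp_mul (φ : Linf) (f : L2) :
    MemLp ((φ : 𝕋 → ℂ) • (f : 𝕋 → ℂ)) 2 μT :=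
  (Lp.memLp f).smul (Lp.memLp φ)

/-- Multiplication by an `L^∞` function, as a bounded operator on `L²`. -/
def mulCLM (φ : Linf) : L2 →L[ℂ] L2 :=
  LinearMap.mkContinuous
    { toFun := fun f => (memLp_mul φ f).toLp _
      map_add' := by
        intro f g
        rw [← MemLp.toLp_add (memLp_mul φ f) (memLp_mul φ g)]
        apply MemLp.toLp_congr
        filter_upwards [Lp.coeFn_add f g] with x hx
        simp only [Pi.smul_apply, smul_eq_mul, Pi.mul_apply, hx, Pi.add_apply, mul_add]
      map_smul' := by
        intro c f
        show (memLp_mul φ (c • f)).toLp _ = c • (memLp_mul φ f).toLp _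
        rw [← MemLp.toLp_const_smul c (memLp_mul φ f)]
        apply MemLp.toLp_congr
        filter_upwards [Lp.coeFn_smul c f] with x hx
        simp only [Pi.smul_apply, smul_eq_mul, Pi.mul_apply, hx]
        ring }
    ‖φ‖
    (by
      intro f
      simp only [LinearMap.coe_mk, AddHom.coe_mk]
      rw [Lp.norm_toLp]
      have h := eLpNorm_smul_le_mul_eLpNorm (p := ⊤) (q := 2) (r := 2)
        (Lp.memLp f).1 (Lp.memLp φ).1
      calc (eLpNorm ((φ : 𝕋 → ℂ) • (f : 𝕋 → ℂ)) 2 μT).toReal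
          ≤ (eLpNorm (φ : 𝕋 → ℂ) ⊤ μT * eLpNorm (f : 𝕋 → ℂ) 2 μT).toReal := by
            exact ENNReal.toReal_mono (by
              exact ENNReal.mul_ne_top (Lp.memLp φ).2.ne (Lp.memLp f).2.ne) h
        _ = ‖φ‖ * ‖f‖ := by
            rw [ENNReal.toReal_mul, Lp.norm_def, Lp.norm_def])

/-- The Hardy space `H²` as a subspace of `L²`: the functions whose negative Fourier
coefficients vanish. -/
def Hardy : Submodule ℂ L2 where
  carrier := {f : L2 | ∀ n : ℤ, n < 0 → ⟪(fourierLp 2 n : L2), f⟫_ℂ = 0}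
  add_mem' := by
    intro a b ha hb n hn
    rw [inner_add_right, ha n hn, hb n hn, add_zero]
  zero_mem' := by
    intro n hn
    exact inner_zero_right _
  smul_mem' := by
    intro c a ha n hn
    rw [inner_smul_right, ha n hn, mul_zero]

theorem isClosed_Hardy : IsClosed (Hardy : Set L2) := by
  have : (Hardy : Set L2)
      = ⋂ n : ℤ, ⋂ _ : n < 0, {f : L2 | ⟪(fourierLp 2 n : L2), f⟫_ℂ = 0} := by
    ext f
    simp only [Set.mem_iInter, Set.mem_setOf_eq, SetLike.mem_coe]
    exact Iff.rfl
  rw [this]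
  exact isClosed_iInter fun n => isClosed_iInter fun _ =>
    isClosed_eq (Continuous.inner continuous_const continuous_id) continuous_const

instance : CompleteSpace Hardy := isClosed_Hardy.completeSpace_coe

/-- Inclusion of the Hardy space into `L²`. -/
def inclH : Hardy →L[ℂ] L2 := Hardy.subtypeL

/-- The Riesz projection `P : L² → H²`. -/
def projH : L2 →L[ℂ] Hardy := Hardy.orthogonalProjectionOnto

/-- The Riesz projection, viewed as an operator `L² → L²`. -/
def PFull : L2 →L[ℂ] L2 := inclH ∘L projH

/-- The Toeplitz operator `T_φ f = P(φ f)` on the Hardy space. -/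
def Toep (φ : Linf) : Hardy →L[ℂ] Hardy := projH ∘L mulCLM φ ∘L inclH

/-- The Hankel operator `H_φ f = (I − P)(φ f)`, mapping `H²` into `L²`. -/
def Hank (φ : Linf) : Hardy →L[ℂ] L2 := (mulCLM φ ∘L inclH) - (inclH ∘L Toep φ)

/-- A continuous map on the circle, as an element of `L^∞`. -/
def cLinf (g : C(𝕋, ℂ)) : Linf := ContinuousMap.toLp (E := ℂ) ⊤ μT ℂ g

/-- The coordinate function `z = e^{ix}` in `L^∞`. -/
def zL : Linf := cLinf (fourier 1)

/-- The conjugate coordinate function `z̄ = e^{-ix}` in `L^∞`. -/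
def zbarL : Linf := cLinf (fourier (-1))

/-- The constant function `c` in `L^∞`. -/
def constL (c : ℂ) : Linf := cLinf (ContinuousMap.const _ c)

/-- An `L^∞` function, viewed as an element of `L²` (the measure is finite). -/
def toL2 (φ : Linf) : L2 :=
  ((Lp.memLp φ).mono_exponent (le_top : (2:ℝ≥0∞) ≤ ⊤)).toLp φ

/-- The constant function `1`, as an element of the Hardy space. -/
def oneH : Hardy :=
  ⟨(fourierLp 2 0 : L2), fun n hn => orthonormal_fourier.2 (show n ≠ 0 from hn.ne)⟩

/-- The anti-unitary operator `V` on `L²`, `(Vh)(w) = w̄ · conj (h w)`. -/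
def Vop (h : L2) : L2 := mulCLM zbarL (conjL2 h)

/-- `φ ∈ L^∞` is an inner function: `φ ∈ H²` and `|φ| = 1` a.e. -/
def IsInnerFn (u : Linf) : Prop :=
  toL2 u ∈ Hardy ∧ ∀ᵐ x ∂μT, ‖(u : 𝕋 → ℂ) x‖ = 1

/-- `φ ∈ L^∞` is nonconstant (as an a.e. class). -/
def Nonconst (u : Linf) : Prop := ¬ ∃ c : ℂ, (u : 𝕋 → ℂ) =ᵐ[μT] fun _ => c

/-- `Q` is an orthogonal projection: self-adjoint and idempotent. -/
def IsOrthoProj {H : Type*} [NormedAddCommGroup H] [InnerProductSpace ℂ H]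
    [CompleteSpace H] (Q : H →L[ℂ] H) : Prop :=
  IsSelfAdjoint Q ∧ Q ∘L Q = Q

theorem memLinf_conj (φ : Linf) : MemLp (fun x => conj ((φ : 𝕋 → ℂ) x)) ⊤ μT :=
  ⟨RCLike.continuous_conj.comp_aestronglyMeasurable (Lp.memLp φ).1,
    by
      rw [show (fun x => conj ((φ : 𝕋 → ℂ) x)) = conj (φ : 𝕋 → ℂ) from rfl, eLpNorm_conj]
      exact (Lp.memLp φ).2⟩

/-- Pointwise complex conjugation on `L^∞`. -/
def conjLinf (φ : Linf) : Linf := (memLinf_conj φ).toLp _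

/-- The pointwise product of two `L^∞` functions. -/
def mulLinf (φ ψ : Linf) : Linf :=
  (((Lp.memLp ψ).smul (Lp.memLp φ)) :
    MemLp ((φ : 𝕋 → ℂ) • (ψ : 𝕋 → ℂ)) ⊤ μT).toLp _

/-- The Hankel operator `H_φ = (I − P) M_φ P`, as an operator on all of `L²`. -/
def HankFull (φ : Linf) : L2 →L[ℂ] L2 := (1 - PFull) ∘L mulCLM φ ∘L PFull

/-! ### Auxiliary lemmas for the main theorem -/

/-- The `n`-th Fourier coefficient of an `L²` element, as an inner product. -/
def coeff (n : ℤ) (a : L2) : ℂ := ⟪(fourierLp 2 n : L2), a⟫_ℂ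

theorem inner_L2 (a b : L2) :
    ⟪a, b⟫_ℂ = ∫ x, conj ((a : 𝕋 → ℂ) x) * ((b : 𝕋 → ℂ) x) ∂μT := by
  rw [MeasureTheory.L2.inner_def]
  simp only [RCLike.inner_apply']

theorem coeff_eq (n : ℤ) (a : L2) :
    coeff n a = ∫ x, conj (fourier n x) * ((a : 𝕋 → ℂ) x) ∂μT := by
  rw [coeff, inner_L2]
  refine integral_congr_ae ?_
  filter_upwards [coeFn_fourierLp (T := 2 * Real.pi) 2 n] with x hx
  rw [hx]

theorem coeff_sub (n : ℤ) (a b : L2) : coeff n (a - b) = coeff n a - coeff n b :=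
  inner_sub_right _ _ _

theorem coeff_add (n : ℤ) (a b : L2) : coeff n (a + b) = coeff n a + coeff n b :=
  inner_add_right _ _ _

theorem coeff_smul (n : ℤ) (c : ℂ) (a : L2) : coeff n (c • a) = c * coeff n a :=
  inner_smul_right _ _ _

theorem eq_zero_of_coeff (a : L2) (H : ∀ n, coeff n a = 0) : a = 0 := by
  have hs := fourierBasis.hasSum_inner_mul_inner a a
  have h0 : (fun i : ℤ => ⟪a, fourierBasis i⟫_ℂ * ⟪(fourierBasis i : L2), a⟫_ℂ)
      = fun _ => (0 : ℂ) := by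
    funext i
    have hz : ⟪((fourierBasis (T := 2 * Real.pi)) i : L2), a⟫_ℂ = 0 := by
      rw [coe_fourierBasis]; exact H i
    rw [hz, mul_zero]
  rw [h0] at hs
  have : ⟪a, a⟫_ℂ = 0 := (hasSum_zero.unique hs).symm
  exact inner_self_eq_zero.mp this

theorem ext_coeff {a b : L2} (H : ∀ n, coeff n a = coeff n b) : a = b := by
  have : a - b = 0 := eq_zero_of_coeff _ (fun n => by rw [coeff_sub, H n, sub_self])
  exact sub_eq_zero.mp this

theorem inner_hardy_zero (m : L2) (H : ∀ n : ℤ, 0 ≤ n → coeff n m = 0)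
    (w : L2) (hw : w ∈ Hardy) : ⟪m, w⟫_ℂ = 0 := by
  have hs := fourierBasis.hasSum_inner_mul_inner m w
  have h0 : (fun i : ℤ => ⟪m, fourierBasis i⟫_ℂ * ⟪(fourierBasis i : L2), w⟫_ℂ)
      = fun _ => (0 : ℂ) := by
    funext i
    rcases le_or_gt 0 i with hi | hi
    · have hz : ⟪((fourierBasis (T := 2 * Real.pi)) i : L2), m⟫_ℂ = 0 := by
        rw [coe_fourierBasis]; exact H i hi
      have : ⟪m, ((fourierBasis (T := 2 * Real.pi)) i : L2)⟫_ℂ = 0 := by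
        rw [← inner_conj_symm, hz, map_zero]
      rw [this, zero_mul]
    · have hz : ⟪((fourierBasis (T := 2 * Real.pi)) i : L2), w⟫_ℂ = 0 := by
        rw [coe_fourierBasis]; exact hw i hi
      rw [hz, mul_zero]
  rw [h0] at hs
  exact (hasSum_zero.unique hs).symm

theorem fourierLp_mem_Hardy {n : ℤ} (hn : 0 ≤ n) : (fourierLp 2 n : L2) ∈ Hardy :=
  fun m hm => orthonormal_fourier.2 (by omega : m ≠ n)

theorem PFull_apply (k : L2) : PFull k = ((projH k : Hardy) : L2) := rfl

theorem coeff_PFull (n : ℤ) (k : L2) :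
    coeff n (PFull k) = if 0 ≤ n then coeff n k else 0 := by
  split_ifs with hn
  · have horth : ⟪k - PFull k, (fourierLp 2 n : L2)⟫_ℂ = 0 :=
      Hardy.starProjection_inner_eq_zero k _ (fourierLp_mem_Hardy hn)
    have h2 : ⟪(fourierLp 2 n : L2), k - PFull k⟫_ℂ = 0 := by
      rw [← inner_conj_symm, horth, map_zero]
    rw [inner_sub_right] at h2
    have : coeff n k - coeff n (PFull k) = 0 := h2
    linear_combination -this
  · exact (projH k).2 n (not_le.mp hn)

theorem PFull_eq_of_mem {k : L2} (hk : k ∈ Hardy) : PFull k = k := by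
  rw [PFull_apply]
  have : projH k = ⟨k, hk⟩ :=
    Submodule.orthogonalProjectionOnto_mem_subspace_eq_self (K := Hardy) ⟨k, hk⟩
  rw [this]

theorem coe_Toep (φ : Linf) (k : Hardy) :
    ((Toep φ k : Hardy) : L2) = PFull (mulCLM φ (k : L2)) := rfl

theorem coeff_Toep (φ : Linf) (k : Hardy) (n : ℤ) :
    coeff n ((Toep φ k : Hardy) : L2)
      = if 0 ≤ n then coeff n (mulCLM φ (k : L2)) else 0 := by
  rw [coe_Toep, coeff_PFull]

theorem Hank_apply (φ : Linf) (k : Hardy) :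
    Hank φ k = mulCLM φ (k : L2) - PFull (mulCLM φ (k : L2)) := rfl

theorem coeff_Hank (φ : Linf) (k : Hardy) (n : ℤ) :
    coeff n (Hank φ k) = if 0 ≤ n then 0 else coeff n (mulCLM φ (k : L2)) := by
  rw [Hank_apply, coeff_sub, coeff_PFull]
  split_ifs <;> ring

theorem mulCLM_ae (φ : Linf) (k : L2) :
    (mulCLM φ k : 𝕋 → ℂ) =ᵐ[μT] fun x => (φ : 𝕋 → ℂ) x * ((k : 𝕋 → ℂ) x) :=
  (memLp_mul φ k).coeFn_toLp

theorem conjL2_ae (k : L2) :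
    (conjL2 k : 𝕋 → ℂ) =ᵐ[μT] fun x => conj ((k : 𝕋 → ℂ) x) :=
  (memLp_conj k).coeFn_toLp

theorem cLinf_ae (u : C(𝕋, ℂ)) : (cLinf u : 𝕋 → ℂ) =ᵐ[μT] u :=
  ContinuousMap.coeFn_toLp (p := ⊤) (μ := μT) (𝕜 := ℂ) u

theorem zL_ae : (zL : 𝕋 → ℂ) =ᵐ[μT] fun x => fourier 1 x := cLinf_ae _

theorem zbarL_ae : (zbarL : 𝕋 → ℂ) =ᵐ[μT] fun x => fourier (-1) x := cLinf_ae _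

theorem toL2_ae (φ : Linf) : (toL2 φ : 𝕋 → ℂ) =ᵐ[μT] (φ : 𝕋 → ℂ) :=
  MemLp.coeFn_toLp _

theorem conjLinf_ae (φ : Linf) :
    (conjLinf φ : 𝕋 → ℂ) =ᵐ[μT] fun x => conj ((φ : 𝕋 → ℂ) x) :=
  MemLp.coeFn_toLp _

theorem oneH_coe : ((oneH : Hardy) : L2) = (fourierLp 2 0 : L2) := rfl

theorem oneH_ae : (((oneH : Hardy) : L2) : 𝕋 → ℂ) =ᵐ[μT] fun _ => (1 : ℂ) := by
  rw [oneH_coe]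
  filter_upwards [coeFn_fourierLp (T := 2 * Real.pi) 2 0] with x hx
  rw [hx, fourier_zero]

theorem Vop_ae (m : L2) :
    (Vop m : 𝕋 → ℂ) =ᵐ[μT] fun x => fourier (-1) x * conj ((m : 𝕋 → ℂ) x) := by
  filter_upwards [mulCLM_ae zbarL (conjL2 m), zbarL_ae, conjL2_ae m] with x h1 h2 h3
  rw [Vop, h1, h2, h3]

theorem mulCLM_comm (φ ψ : Linf) (k : L2) :
    mulCLM φ (mulCLM ψ k) = mulCLM ψ (mulCLM φ k) := by
  apply Lp.ext
  filter_upwards [mulCLM_ae φ (mulCLM ψ k), mulCLM_ae ψ k,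
    mulCLM_ae ψ (mulCLM φ k), mulCLM_ae φ k] with x h1 h2 h3 h4
  rw [h1, h2, h3, h4]; ring

theorem Vop_sub (a b : L2) : Vop (a - b) = Vop a - Vop b := by
  apply Lp.ext
  filter_upwards [Vop_ae (a - b), Vop_ae a, Vop_ae b, Lp.coeFn_sub a b,
    Lp.coeFn_sub (Vop a) (Vop b)] with x h1 h2 h3 h4 h5
  rw [h5, Pi.sub_apply, h1, h4, Pi.sub_apply, h2, h3, map_sub]
  ring

theorem coeff_mulz (n : ℤ) (k : L2) : coeff n (mulCLM zL k) = coeff (n - 1) k := by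
  rw [coeff_eq, coeff_eq]
  refine integral_congr_ae ?_
  filter_upwards [mulCLM_ae zL k, zL_ae] with x h1 h2
  rw [h1, h2]
  have hidx : -n + 1 = -(n - 1) := by ring
  have h3 : conj (fourier n x) * fourier 1 x = conj (fourier (n - 1) x) := by
    rw [← fourier_neg, ← fourier_neg, ← fourier_add, hidx]
  calc conj (fourier n x) * (fourier 1 x * (k : 𝕋 → ℂ) x)
      = (conj (fourier n x) * fourier 1 x) * (k : 𝕋 → ℂ) x := by ring
    _ = _ := by rw [h3]

theorem coeff_mulzbar (n : ℤ) (k : L2) :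
    coeff n (mulCLM zbarL k) = coeff (n + 1) k := by
  rw [coeff_eq, coeff_eq]
  refine integral_congr_ae ?_
  filter_upwards [mulCLM_ae zbarL k, zbarL_ae] with x h1 h2
  rw [h1, h2]
  have hidx : -n + -1 = -(n + 1) := by ring
  have h3 : conj (fourier n x) * fourier (-1) x = conj (fourier (n + 1) x) := by
    rw [← fourier_neg, ← fourier_neg, ← fourier_add, hidx]
  calc conj (fourier n x) * (fourier (-1) x * (k : 𝕋 → ℂ) x)
      = (conj (fourier n x) * fourier (-1) x) * (k : 𝕋 → ℂ) x := by ring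
    _ = _ := by rw [h3]

theorem coeff_Vop (n : ℤ) (m : L2) : coeff n (Vop m) = conj (coeff (-n - 1) m) := by
  rw [coeff_eq, coeff_eq, ← integral_conj]
  refine integral_congr_ae ?_
  filter_upwards [Vop_ae m] with x h1
  rw [h1]
  have h4 : conj (fourier n x) * fourier (-1) x = fourier (-n - 1) x := by
    have hidx : -n + -1 = -n - 1 := by ring
    rw [← fourier_neg, ← fourier_add, hidx]
  calc conj (fourier n x) * (fourier (-1) x * conj ((m : 𝕋 → ℂ) x))
      = (conj (fourier n x) * fourier (-1) x) * conj ((m : 𝕋 → ℂ) x) := by ring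
    _ = fourier (-n - 1) x * conj ((m : 𝕋 → ℂ) x) := by rw [h4]
    _ = conj (conj (fourier (-n - 1) x) * ((m : 𝕋 → ℂ) x)) := by
        rw [map_mul, Complex.conj_conj]

theorem coeff_fourierLp (m k : ℤ) :
    coeff m (fourierLp 2 k : L2) = if m = k then 1 else 0 :=
  orthonormal_iff_ite.mp orthonormal_fourier m k

theorem coeff_Vop_Hank (φ : Linf) (n : ℤ) :
    coeff n (Vop (Hank φ oneH))
      = if 0 ≤ n then conj (coeff (-n - 1) (mulCLM φ ((oneH : Hardy) : L2))) else 0 := by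
  rcases le_or_gt 0 n with hn | hn
  · rw [coeff_Vop, coeff_Hank, if_neg (by omega : ¬ (0:ℤ) ≤ -n - 1), if_pos hn]
  · rw [coeff_Vop, coeff_Hank, if_pos (by omega : (0:ℤ) ≤ -n - 1),
      if_neg (not_le.mpr hn), map_zero]

theorem coeff_Vop_Hank_conj (f : Linf) (n : ℤ) :
    coeff n (Vop (Hank (conjLinf f) oneH))
      = if 0 ≤ n then coeff (n + 1) (toL2 f) else 0 := by
  rw [coeff_Vop_Hank]
  rcases le_or_gt 0 n with hn | hn
  · rw [if_pos hn, if_pos hn, coeff_eq, coeff_eq, ← integral_conj]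
    refine integral_congr_ae ?_
    filter_upwards [mulCLM_ae (conjLinf f) ((oneH : Hardy) : L2), conjLinf_ae f,
      oneH_ae, toL2_ae f] with x h1 h2 h3 h4
    rw [h1, h2, h3, h4]
    have h5 : conj (fourier (n + 1) x) = fourier (-n - 1) x := by
      have hidx : -(n + 1) = -n - 1 := by ring
      rw [← fourier_neg, hidx]
    rw [h5]
    simp only [map_mul, map_one, Complex.conj_conj]
    ring
  · rw [if_neg (not_le.mpr hn), if_neg (not_le.mpr hn)]

theorem c_eq (g : Linf) (h : Hardy) :
    ⟪Vop (Hank g oneH), (h : L2)⟫_ℂ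
      = coeff 0 (mulCLM g (mulCLM zL (h : L2))) := by
  have hsplit : Vop (Hank g oneH)
      = Vop (mulCLM g ((oneH : Hardy) : L2))
        - Vop (PFull (mulCLM g ((oneH : Hardy) : L2))) := by
    rw [Hank_apply, Vop_sub]
  rw [hsplit, inner_sub_left]
  have hz : ⟪Vop (PFull (mulCLM g ((oneH : Hardy) : L2))), (h : L2)⟫_ℂ = 0 := by
    refine inner_hardy_zero _ (fun n hn => ?_) _ h.2
    rw [coeff_Vop, coeff_PFull, if_neg (by omega : ¬ (0:ℤ) ≤ -n - 1), map_zero]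
  rw [hz, sub_zero, inner_L2, coeff_eq]
  refine integral_congr_ae ?_
  filter_upwards [Vop_ae (mulCLM g ((oneH : Hardy) : L2)),
    mulCLM_ae g ((oneH : Hardy) : L2), oneH_ae,
    mulCLM_ae g (mulCLM zL (h : L2)), mulCLM_ae zL (h : L2), zL_ae] with x h1 h2 h3 h4 h5 h6
  rw [h1, h2, h3, h4, h5, h6, fourier_zero]
  simp only [map_mul, Complex.conj_conj, map_one]
  have h7 : conj (fourier (-1) x) = fourier 1 x := by
    rw [← fourier_neg]; norm_num
  rw [h7]
  ring

theorem coe_Toep_zL (h : Hardy) :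
    ((Toep zL h : Hardy) : L2) = mulCLM zL (h : L2) := by
  have hmem : mulCLM zL (h : L2) ∈ Hardy := by
    intro n hn
    have : coeff n (mulCLM zL (h : L2)) = 0 := by
      rw [coeff_mulz]
      exact h.2 (n - 1) (by omega)
    exact this
  rw [coe_Toep, PFull_eq_of_mem hmem]

theorem W_eq (g : Linf) (h : Hardy) :
    mulCLM zbarL ((Toep g (Toep zL h) : Hardy) : L2) - ((Toep g h : Hardy) : L2)
      = ⟪Vop (Hank g oneH), (h : L2)⟫_ℂ • (fourierLp 2 (-1) : L2) := by
  apply ext_coeff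
  intro m
  rw [coeff_sub, coeff_smul, coeff_mulzbar, coeff_Toep, coeff_Toep, coe_Toep_zL,
    coeff_fourierLp, c_eq]
  have hshift : ∀ j : ℤ, coeff (j + 1) (mulCLM g (mulCLM zL (h : L2)))
      = coeff j (mulCLM g (h : L2)) := by
    intro j
    rw [mulCLM_comm, coeff_mulz]
    have : j + 1 - 1 = j := by ring
    rw [this]
  rcases le_or_gt 0 m with hm | hm
  · rw [if_pos (by omega : (0:ℤ) ≤ m + 1), if_pos hm, hshift m,
      if_neg (by omega : ¬ m = -1), mul_zero, sub_self]
  · rcases eq_or_lt_of_le (show m ≤ -1 by omega) with hm1 | hm1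
    · rw [hm1]
      norm_num
    · rw [if_neg (by omega : ¬ (0:ℤ) ≤ m + 1), if_neg (not_le.mpr hm),
        if_neg (by omega : ¬ m = -1), mul_zero, sub_self]

/-- `T_{z̄} T_f T_g T_z − T_f T_g` is the rank-one operator `(V H_{f̄} 1) ⊗ (V H_g 1)`. -/
theorem toeplitz_conj_shift_sub_eq_rankOne (f g : Linf) (h : Hardy) :
    ((((Toep zbarL ∘L (Toep f ∘L (Toep g ∘L Toep zL))) - Toep f ∘L Toep g) h : Hardy) : L2)
      = ⟪Vop (Hank g oneH), (h : L2)⟫_ℂ • Vop (Hank (conjLinf f) oneH) := by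
  apply ext_coeff
  intro n
  have hcoe : ((((Toep zbarL ∘L (Toep f ∘L (Toep g ∘L Toep zL))) - Toep f ∘L Toep g) h
        : Hardy) : L2)
      = ((Toep zbarL (Toep f (Toep g (Toep zL h))) : Hardy) : L2)
        - ((Toep f (Toep g h) : Hardy) : L2) := by
    simp [ContinuousLinearMap.sub_apply, ContinuousLinearMap.comp_apply]
  rw [hcoe, coeff_sub, coeff_Toep, coeff_Toep, coeff_smul, coeff_Vop_Hank_conj]
  rcases le_or_gt 0 n with hn | hn
  · rw [if_pos hn, if_pos hn, if_pos hn, coeff_mulzbar, coeff_Toep,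
      if_pos (by omega : (0:ℤ) ≤ n + 1)]
    have hstep : coeff (n + 1) (mulCLM f ((Toep g (Toep zL h) : Hardy) : L2))
        = coeff n (mulCLM f (mulCLM zbarL ((Toep g (Toep zL h) : Hardy) : L2))) := by
      rw [mulCLM_comm, coeff_mulzbar]
    rw [hstep]
    have hW : mulCLM zbarL ((Toep g (Toep zL h) : Hardy) : L2)
        = ((Toep g h : Hardy) : L2)
          + ⟪Vop (Hank g oneH), (h : L2)⟫_ℂ • (fourierLp 2 (-1) : L2) :=
      sub_eq_iff_eq_add'.mp (W_eq g h)
    rw [hW, map_add, (mulCLM f).map_smul, coeff_add, coeff_smul]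
    have hfe : coeff n (mulCLM f (fourierLp 2 (-1) : L2)) = coeff (n + 1) (toL2 f) := by
      rw [coeff_eq, coeff_eq]
      refine integral_congr_ae ?_
      filter_upwards [mulCLM_ae f (fourierLp 2 (-1) : L2),
        coeFn_fourierLp (T := 2 * Real.pi) 2 (-1), toL2_ae f] with x h1 h2 h3
      rw [h1, h2, h3]
      have h4 : conj (fourier (n + 1) x) = conj (fourier n x) * fourier (-1) x := by
        have hidx : -(n + 1) = -n + -1 := by ring
        rw [← fourier_neg, ← fourier_neg (n := n), hidx, fourier_add]
      rw [h4]; ring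
    rw [hfe]
    ring
  · rw [if_neg (not_le.mpr hn), if_neg (not_le.mpr hn), if_neg (not_le.mpr hn),
      sub_self, mul_zero]


end ToeplitzProj
end
end
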